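/- Let H be a complex Hilbert space and let M_A and M_B be commuting von Neumann algebras on H satisfying Haag duality M_B = M_A.commutant. If Ψ, Φ ∈ H satisfy ⟪Ψ, a Ψ⟫ = ⟪Φ, a Φ⟫ for all a ∈ M_A, then there exists a partial isometry v ∈ M_B (i.e. v * (adjoint v) * v = v) with v Ψ = Φ. -/

import Mathlib

open scoped InnerProductSpace

/-- Under Haag duality, two purifications of the same state on `M_A` are related by a
partial isometry in `M_B`. -/
theorem haagDuality_partialIsometry {H : Type*} [NormedAddCommGroup H]
    [InnerProductSpace ℂ H] [CompleteSpace H]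
    (M_A M_B : VonNeumannAlgebra H)
    (hcomm : ∀ a ∈ M_A, ∀ b ∈ M_B, a * b = b * a)
    (hhaag : M_B = M_A.commutant)
    (Ψ Φ : H) (hmarg : ∀ a ∈ M_A, ⟪Ψ, a Ψ⟫_ℂ = ⟪Φ, a Φ⟫_ℂ) :
    ∃ v ∈ M_B, v * (ContinuousLinearMap.adjoint v) * v = v ∧ v Ψ = Φ := by
  classical
  -- inner products of vectors in the `M_A`-orbits agree
  have hinner : ∀ a ∈ M_A, ∀ b ∈ M_A, ⟪a Ψ, b Ψ⟫_ℂ = ⟪a Φ, b Φ⟫_ℂ := by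
    intro a ha b hb
    have h1 : ∀ x : H, ⟪a x, b x⟫_ℂ = ⟪x, ((star a) * b) x⟫_ℂ := by
      intro x
      rw [ContinuousLinearMap.mul_apply, ContinuousLinearMap.star_eq_adjoint,
        ContinuousLinearMap.adjoint_inner_right]
    rw [h1, h1, hmarg _ (mul_mem (star_mem ha) hb)]
  have hnorm : ∀ a ∈ M_A, ‖a Φ‖ = ‖a Ψ‖ := by
    intro a ha
    have h := hinner a ha a ha
    rw [inner_self_eq_norm_sq_to_K, inner_self_eq_norm_sq_to_K] at h
    have h2 : ‖a Ψ‖ ^ 2 = ‖a Φ‖ ^ 2 := by exact_mod_cast h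
    nlinarith [norm_nonneg (a Ψ), norm_nonneg (a Φ)]
  have hwd : ∀ a ∈ M_A, ∀ b ∈ M_A, a Ψ = b Ψ → a Φ = b Φ := by
    intro a ha b hb hab
    have hc : (a - b) ∈ M_A := sub_mem ha hb
    have h0 : (a - b) Ψ = 0 := by
      simp [ContinuousLinearMap.sub_apply, hab]
    have h1 := hnorm _ hc
    rw [h0, norm_zero] at h1
    have h2 : (a - b) Φ = 0 := by rwa [norm_eq_zero] at h1
    rw [ContinuousLinearMap.sub_apply, sub_eq_zero] at h2
    exact h2
  -- the subspace `M_A Ψ`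
  let S : Submodule ℂ H :=
    { carrier := {x | ∃ a ∈ M_A, a Ψ = x}
      add_mem' := by
        rintro x y ⟨a, ha, rfl⟩ ⟨b, hb, rfl⟩
        exact ⟨a + b, add_mem ha hb, rfl⟩
      zero_mem' := ⟨0, zero_mem M_A.toStarSubalgebra, rfl⟩
      smul_mem' := by
        rintro c x ⟨a, ha, rfl⟩
        exact ⟨c • a, M_A.toStarSubalgebra.smul_mem ha c, rfl⟩ }
  have hS : ∀ x : H, x ∈ S ↔ ∃ a ∈ M_A, a Ψ = x := fun x => Iff.rfl
  -- the isometry `a Ψ ↦ a Φ` on `S`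
  obtain ⟨T, hT⟩ : ∃ T : S →ₗᵢ[ℂ] H,
      ∀ (x : S) (a : H →L[ℂ] H), a ∈ M_A → a Ψ = (x : H) → T x = a Φ := by
    have hchoose : ∀ x : S, ∃ a ∈ M_A, a Ψ = (x : H) := fun x => x.2
    set f : S → H := fun x => (hchoose x).choose Φ with hf_def
    have hf : ∀ (x : S) (a : H →L[ℂ] H), a ∈ M_A → a Ψ = (x : H) → f x = a Φ := by
      intro x a ha hax
      exact hwd _ (hchoose x).choose_spec.1 _ ha ((hchoose x).choose_spec.2.trans hax.symm)
    refine ⟨⟨⟨⟨f, ?_⟩, ?_⟩, ?_⟩, hf⟩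
    · -- map_add
      intro x y
      obtain ⟨a, ha, hax⟩ := hchoose x
      obtain ⟨b, hb, hby⟩ := hchoose y
      show f (x + y) = f x + f y
      rw [hf x a ha hax, hf y b hb hby,
        hf (x + y) (a + b) (add_mem ha hb) (by simp [ContinuousLinearMap.add_apply, hax, hby])]
      simp [ContinuousLinearMap.add_apply]
    · -- map_smul
      intro c x
      obtain ⟨a, ha, hax⟩ := hchoose x
      show f (c • x) = c • f x
      rw [hf x a ha hax,
        hf (c • x) (c • a) (M_A.toStarSubalgebra.smul_mem ha c)
          (by simp [ContinuousLinearMap.smul_apply, hax])]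
      simp [ContinuousLinearMap.smul_apply]
    · -- norm_map
      intro x
      obtain ⟨a, ha, hax⟩ := hchoose x
      show ‖f x‖ = ‖x‖
      rw [hf x a ha hax, hnorm a ha, hax]
      rfl
  -- the closure `K` of `S` and the inclusion `e : S → K`
  have hSK : ∀ x : H, x ∈ S → x ∈ S.topologicalClosure := fun x hx =>
    S.le_topologicalClosure hx
  haveI : CompleteSpace S.topologicalClosure := Submodule.topologicalClosure.completeSpace S
  let e : S →L[ℂ] S.topologicalClosure :=
    (Submodule.inclusion S.le_topologicalClosure).mkContinuous 1 (fun x => by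
      rw [one_mul]; rfl)
  have he_isom : Isometry e := AddMonoidHomClass.isometry_of_norm e (fun x => rfl)
  have hdense : DenseRange e := by
    intro y
    have himg : Subtype.val '' Set.range e = (S : Set H) := by
      ext z
      constructor
      · rintro ⟨w, ⟨u, rfl⟩, rfl⟩
        exact u.2
      · intro hz
        exact ⟨e ⟨z, hz⟩, ⟨⟨z, hz⟩, rfl⟩, rfl⟩
    rw [closure_subtype, himg]
    have := y.2
    rwa [← SetLike.mem_coe, Submodule.topologicalClosure_coe] at this
  -- extend the isometry to the closure and compose with the orthogonal projection
  let vK : S.topologicalClosure →L[ℂ] H :=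
    T.toContinuousLinearMap.extend e
  have heq : ∀ x : S, vK (e x) = T x := fun x =>
    ContinuousLinearMap.extend_eq _ hdense he_isom.isUniformInducing x
  let P : H →L[ℂ] S.topologicalClosure := Submodule.orthogonalProjectionOnto S.topologicalClosure
  let v : H →L[ℂ] H := vK.comp P
  have hPK : ∀ (x : H) (hx : x ∈ S.topologicalClosure), P x = ⟨x, hx⟩ := fun x hx =>
    Submodule.orthogonalProjectionOnto_mem_subspace_eq_self (⟨x, hx⟩ : S.topologicalClosure)
  have hvS : ∀ (x : H) (hx : x ∈ S), v x = T ⟨x, hx⟩ := by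
    intro x hx
    show vK (P x) = T ⟨x, hx⟩
    rw [hPK x (hSK x hx)]
    have h1 : (⟨x, hSK x hx⟩ : S.topologicalClosure) = e ⟨x, hx⟩ := rfl
    rw [h1, heq]
  have hva : ∀ a ∈ M_A, v (a Ψ) = a Φ := by
    intro a ha
    rw [hvS (a Ψ) ⟨a, ha, rfl⟩]
    exact hT _ a ha rfl
  have hvΨ : v Ψ = Φ := by
    have h1 := hva 1 (one_mem M_A.toStarSubalgebra)
    simpa using h1
  -- `vK` preserves inner products
  have hinnerK : ∀ x y : S.topologicalClosure, ⟪vK x, vK y⟫_ℂ = ⟪(x : H), (y : H)⟫_ℂ := by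
    intro x y
    refine hdense.induction_on₂
      (p := fun x y => ⟪vK x, vK y⟫_ℂ = ⟪(x : H), (y : H)⟫_ℂ) ?_ ?_ x y
    · apply isClosed_eq
      · exact (vK.continuous.comp continuous_fst).inner (vK.continuous.comp continuous_snd)
      · exact (continuous_subtype_val.comp continuous_fst).inner
          (continuous_subtype_val.comp continuous_snd)
    · intro a b
      rw [heq, heq]
      exact T.inner_map_map a b
  have hvv : ∀ x y : H, ⟪v x, v y⟫_ℂ = ⟪x, ((P y : S.topologicalClosure) : H)⟫_ℂ := by
    intro x y
    have h1 : ⟪v x, v y⟫_ℂ = ⟪((P x : S.topologicalClosure) : H), ((P y) : H)⟫_ℂ :=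
      hinnerK (P x) (P y)
    rw [h1]; refine (Submodule.inner_starProjection_left_eq_right _ x _).trans ?_
    congr 1
    exact Submodule.starProjection_eq_self_iff.mpr (P y).2
  have key1 : ∀ y : H, (ContinuousLinearMap.adjoint v) (v y) = ((P y : S.topologicalClosure) : H) := by
    intro y
    apply ext_inner_left ℂ
    intro x
    rw [ContinuousLinearMap.adjoint_inner_right]
    exact hvv x y
  have key2 : ∀ y : H, v ((P y : S.topologicalClosure) : H) = v y := by
    intro y
    show vK (P ((P y : S.topologicalClosure) : H)) = vK (P y)
    rw [hPK _ (P y).2]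
  -- partial isometry property
  have hpi : v * (ContinuousLinearMap.adjoint v) * v = v := by
    ext y
    show v ((ContinuousLinearMap.adjoint v) (v y)) = v y
    rw [key1, key2]
  -- `M_A` maps `K` and `Kᗮ` to themselves
  have hKinv : ∀ g ∈ M_A, ∀ x ∈ S.topologicalClosure, g x ∈ S.topologicalClosure := by
    intro g hg x hx
    have hmap : Set.MapsTo g (S : Set H) (S : Set H) := by
      rintro z ⟨b, hb, rfl⟩
      exact ⟨g * b, mul_mem hg hb, rfl⟩
    rw [← SetLike.mem_coe, Submodule.topologicalClosure_coe] at hx ⊢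
    exact map_mem_closure g.continuous hx hmap
  have horth : ∀ g ∈ M_A, ∀ q ∈ (S.topologicalClosure)ᗮ, g q ∈ (S.topologicalClosure)ᗮ := by
    intro g hg q hq
    rw [Submodule.mem_orthogonal]
    intro u hu
    rw [← ContinuousLinearMap.adjoint_inner_left]
    refine (Submodule.mem_orthogonal _ q).mp hq _ ?_
    have : (ContinuousLinearMap.adjoint g) u = (star g) u := by
      rw [ContinuousLinearMap.star_eq_adjoint]
    rw [this]
    exact hKinv _ (star_mem hg) u hu
  have hvq : ∀ q ∈ (S.topologicalClosure)ᗮ, v q = 0 := by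
    intro q hq
    show vK (P q) = 0
    rw [Submodule.orthogonalProjectionOnto_apply_of_mem_orthogonal hq, map_zero]
  have hcommK : ∀ g ∈ M_A, ∀ p ∈ S.topologicalClosure, v (g p) = g (v p) := by
    intro g hg p hp
    have hclosed : IsClosed {z : H | v (g z) = g (v z)} :=
      isClosed_eq (v.continuous.comp g.continuous) (g.continuous.comp v.continuous)
    have hsub : (S : Set H) ⊆ {z : H | v (g z) = g (v z)} := by
      rintro z ⟨b, hb, rfl⟩
      show v (g (b Ψ)) = g (v (b Ψ))
      rw [hva b hb]
      have h1 : g (b Ψ) = (g * b) Ψ := rfl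
      rw [h1, hva _ (mul_mem hg hb)]
      rfl
    have hsub2 := closure_minimal hsub hclosed
    rw [← SetLike.mem_coe, Submodule.topologicalClosure_coe] at hp
    exact hsub2 hp
  -- `v` lies in the commutant of `M_A`
  have hmemB : v ∈ M_B := by
    rw [hhaag, VonNeumannAlgebra.mem_commutant_iff]
    intro g hg
    ext x
    show g (v x) = v (g x)
    set p : H := ((P x : S.topologicalClosure) : H) with hp_def
    have hpK : p ∈ S.topologicalClosure := (P x).2
    have hqO : x - p ∈ (S.topologicalClosure)ᗮ := Submodule.sub_starProjection_mem_orthogonal x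
    have hx : x = p + (x - p) := by abel
    have h1 : v x = v p := by
      conv_lhs => rw [hx]
      rw [map_add, hvq _ hqO, add_zero]
    have h2 : v (g x) = v (g p) := by
      conv_lhs => rw [hx]
      rw [map_add, map_add, hvq _ (horth g hg _ hqO), add_zero]
    rw [h1, h2, hcommK g hg p hpK]
  exact ⟨v, hmemB, hpi, hvΨ⟩
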